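/- Let γ ≥ 1 be an integer and set p := 1 + νγ. Then Coeff_{q^γ}( Res_{w=0}( − ((1+w)^n − w^n)/(w^{n−r−1} ∏_{k=1}^r(d_k w+1)) · ( 1 − ∑_{β≥0} ∑_{l=0}^{p−νβ} c̃_{p,l}^{(β)} q^β w^{−(p−νβ−l)} ) ) ) = Res_{w=0}( (1+w)^n (c̃_{p,0}^{(γ)} + c̃_{p,1}^{(γ)} w) / (w^{n−r} ∏_{k=1}^r(d_k w+1)) ), where both sides are rational numbers, the rational prefactors are expanded as Laurent series at w = 0 (∏_k(d_k w+1) has constant term 1), and Res_{w=0} extracts the coefficient of w^{−1} in each q-coefficient. -/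

import Mathlib

/-- The Laurent-series variable `w`. -/
noncomputable def Zl : LaurentSeries ℚ := HahnSeries.single (1 : ℤ) (1 : ℚ)

/-- `Res_{w=0}`: in each q-coefficient take the coefficient of `w⁻¹`. -/
noncomputable def resH (f : PowerSeries (LaurentSeries ℚ)) : PowerSeries ℚ :=
  PowerSeries.mk fun β => (PowerSeries.coeff (R := LaurentSeries ℚ) β f).coeff (-1)

/-- The coefficients `c_{p,l}^{(β)}`. -/
noncomputable def ccoef (n r : ℕ) (d : Fin r → ℕ) (p β : ℕ) (l : ℤ) : ℚ :=
  if l < 0 then 0 else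
    PowerSeries.coeff (R := ℚ) l.toNat
      (((PowerSeries.X + (β : PowerSeries ℚ)) ^ p *
          ∏ k : Fin r, ∏ i ∈ Finset.range (d k * β),
            ((d k : PowerSeries ℚ) * PowerSeries.X + ((i + 1 : ℕ) : PowerSeries ℚ))) *
        (∏ j ∈ Finset.range β, (PowerSeries.X + ((j + 1 : ℕ) : PowerSeries ℚ)) ^ n)⁻¹)

lemma coe_coeff_neg_one (f : PowerSeries ℚ) :
    (HahnSeries.ofPowerSeries ℤ ℚ f).coeff (-1) = 0 := by
  rw [HahnSeries.ofPowerSeries_apply]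
  exact HahnSeries.embDomain_notin_range (by
    rintro ⟨n, hn⟩
    simp at hn)

lemma Zl_ne_zero : Zl ≠ 0 := by
  intro h
  have := congrArg (fun f : LaurentSeries ℚ => f.coeff 1) h
  simp [Zl] at this

lemma Zl_eq_coe : Zl = HahnSeries.ofPowerSeries ℤ ℚ PowerSeries.X := by
  rw [HahnSeries.ofPowerSeries_X]; rfl

lemma single_pair_eq_coe (c0 c1 : ℚ) : HahnSeries.single (0 : ℤ) c0 + HahnSeries.single (1 : ℤ) c1
    = HahnSeries.ofPowerSeries ℤ ℚ (PowerSeries.C c0 + PowerSeries.C c1 * PowerSeries.X) := by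
  rw [map_add, map_mul, HahnSeries.ofPowerSeries_C, HahnSeries.ofPowerSeries_C,
    HahnSeries.ofPowerSeries_X, HahnSeries.C_apply, HahnSeries.C_apply,
    HahnSeries.single_mul_single]
  norm_num

theorem stmt12 (n r : ℕ) (hr : 1 ≤ r) (d : Fin r → ℕ) (hd : ∀ k, 2 ≤ d k)
    (m D : ℕ) (hm : m = ∑ k, d k) (hD : D = ∏ k, d k ^ d k)
    (ν : ℕ) (hν : ν = n - m) (hmn : m < n)
    -- the coefficients c̃_{p,l}^{(β)}
    (ct : ℕ → ℤ → ℕ → ℚ)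
    (hct0 : ∀ (p : ℕ) (l : ℤ), ct p l 0 = if l = (p : ℤ) then 1 else 0)
    (hctz : ∀ (p : ℕ) (l : ℤ) (β : ℕ),
      (l < 0 ∨ (p : ℤ) - (ν : ℤ) * (β : ℤ) < l) → ct p l β = 0)
    (hctrec : ∀ (p : ℕ) (l : ℤ) (β : ℕ), 1 ≤ β → 0 ≤ l → l ≤ (p : ℤ) - (ν : ℤ) * (β : ℤ) →
      ct p l β = -∑ β₁ ∈ Finset.range β, ∑ k ∈ Finset.Icc (0 : ℤ) ((p : ℤ) - (ν : ℤ) * (β₁ : ℤ)),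
        ct p k β₁ * ccoef n r d k.toNat (β - β₁) l)
    (γ : ℕ) (hγ : 1 ≤ γ) (p : ℕ) (hp : p = 1 + ν * γ)
    -- the series ∑_{β≥0} ∑_{l=0}^{p−νβ} c̃_{p,l}^{(β)} q^β w^{−(p−νβ−l)}
    (Sp : PowerSeries (LaurentSeries ℚ))
    (hSp : ∀ β : ℕ, PowerSeries.coeff (R := LaurentSeries ℚ) β Sp =
      ∑ l ∈ Finset.Icc (0 : ℤ) ((p : ℤ) - (ν : ℤ) * (β : ℤ)),
        HahnSeries.single (-((p : ℤ) - (ν : ℤ) * (β : ℤ) - l)) (ct p l β)) :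
    PowerSeries.coeff (R := ℚ) γ (resH (PowerSeries.C (R := LaurentSeries ℚ)
        (-(((1 + Zl) ^ n - Zl ^ n) /
            (Zl ^ (n - r - 1) * ∏ k : Fin r, ((d k : LaurentSeries ℚ) * Zl + 1)))) *
        (1 - Sp)))
      = (((1 + Zl) ^ n *
            (HahnSeries.single (0 : ℤ) (ct p 0 γ) + HahnSeries.single (1 : ℤ) (ct p 1 γ))) /
          (Zl ^ (n - r) * ∏ k : Fin r, ((d k : LaurentSeries ℚ) * Zl + 1))).coeff (-1) := by
  -- basic size facts
  have h2r : 2 * r ≤ m := by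
    have : ∑ _k : Fin r, 2 ≤ ∑ k, d k := Finset.sum_le_sum fun k _ => hd k
    simpa [hm, Finset.sum_const, mul_comm] using this
  set c0 := ct p 0 γ with hc0
  set c1 := ct p 1 γ with hc1
  set P : LaurentSeries ℚ := ∏ k : Fin r, ((d k : LaurentSeries ℚ) * Zl + 1) with hPdef
  set Pps : PowerSeries ℚ := ∏ k : Fin r, ((d k : PowerSeries ℚ) * PowerSeries.X + 1) with hPps
  have hPcoe : HahnSeries.ofPowerSeries ℤ ℚ Pps = P := by
    rw [hPps, map_prod]
    simp [Zl_eq_coe, hPdef]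
  have hPconst : PowerSeries.constantCoeff Pps = 1 := by
    simp [hPps, map_prod]
  have hPQ : Pps * Pps⁻¹ = 1 := PowerSeries.mul_inv_cancel _ (by rw [hPconst]; norm_num)
  have hP1 : P * (HahnSeries.ofPowerSeries ℤ ℚ Pps⁻¹) = 1 := by
    rw [← hPcoe, ← map_mul, hPQ, map_one]
  have hPne : P ≠ 0 := left_ne_zero_of_mul_eq_one hP1
  have hQ : HahnSeries.ofPowerSeries ℤ ℚ Pps⁻¹ = P⁻¹ :=
    (inv_eq_of_mul_eq_one_right hP1).symm
  -- coefficient of Sp at γ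
  have hγ0 : γ ≠ 0 := by omega
  have hZ : Zl ≠ 0 := Zl_ne_zero
  have hpq : (p : ℤ) - (ν : ℤ) * (γ : ℤ) = 1 := by rw [hp]; push_cast; ring
  have hSγ : PowerSeries.coeff (R := LaurentSeries ℚ) γ Sp =
      HahnSeries.single (-1 : ℤ) c0 + HahnSeries.single (0 : ℤ) c1 := by
    rw [hSp γ, hpq, show Finset.Icc (0:ℤ) 1 = {0, 1} by decide,
      Finset.sum_insert (by decide), Finset.sum_singleton]
    norm_num [hc0, hc1]
  -- reduce the LHS
  conv_lhs => rw [resH]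
  rw [PowerSeries.coeff_mk, PowerSeries.coeff_C_mul, map_sub, PowerSeries.coeff_one,
    if_neg hγ0, hSγ, zero_sub]
  have hnegneg : ∀ x y : LaurentSeries ℚ, -x * -y = x * y := fun x y => by ring
  rw [hnegneg]
  -- the key Laurent-series identity
  have hs : HahnSeries.single (-1 : ℤ) c0 + HahnSeries.single (0 : ℤ) c1
      = Zl⁻¹ * (HahnSeries.single (0 : ℤ) c0 + HahnSeries.single (1 : ℤ) c1) := by
    rw [eq_inv_mul_iff_mul_eq₀ Zl_ne_zero, mul_add, Zl, HahnSeries.single_mul_single,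
      HahnSeries.single_mul_single]
    norm_num
  have key : ((1 + Zl) ^ n - Zl ^ n) / (Zl ^ (n - r - 1) * P) *
        (HahnSeries.single (-1 : ℤ) c0 + HahnSeries.single (0 : ℤ) c1)
      = ((1 + Zl) ^ n * (HahnSeries.single (0 : ℤ) c0 + HahnSeries.single (1 : ℤ) c1)) /
          (Zl ^ (n - r) * P)
        - Zl ^ r * ((HahnSeries.single (0 : ℤ) c0 + HahnSeries.single (1 : ℤ) c1) * P⁻¹) := by
    rw [hs, show n - r = (n - r - 1) + 1 by omega,
      show Zl ^ n = Zl ^ ((n - r - 1) + 1) * Zl ^ r by rw [← pow_add]; congr 1; omega]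
    field_simp
    rw [Nat.add_sub_cancel]
    ring
  rw [key, HahnSeries.coeff_sub, ← hQ, single_pair_eq_coe,
    show Zl ^ r = HahnSeries.ofPowerSeries ℤ ℚ (PowerSeries.X ^ r) by rw [map_pow, ← Zl_eq_coe],
    ← map_mul, ← map_mul, coe_coeff_neg_one, sub_zero]
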